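/- For a linear operator T on a vector space X, the sequence n ↦ dim(R(T^n)/R(T^{n+1})) is decreasing, i.e. dim(R(T^{n+1})/R(T^{n+2})) ≤ dim(R(T^n)/R(T^{n+1})) for all n. -/

import Mathlib

/-- The sequence `n ↦ dim (R(T^n) / R(T^{n+1}))` is decreasing. -/
theorem range_quotient_rank_antitone
    {K : Type*} [Field K] {X : Type*} [AddCommGroup X] [Module K X]
    (T : Module.End K X) (n : ℕ) :
    Module.rank K
      (↥(LinearMap.range (T ^ (n + 1))) ⧸
        (LinearMap.range (T ^ (n + 2))).comap (LinearMap.range (T ^ (n + 1))).subtype) ≤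
    Module.rank K
      (↥(LinearMap.range (T ^ n)) ⧸
        (LinearMap.range (T ^ (n + 1))).comap (LinearMap.range (T ^ n)).subtype) := by
  -- T maps R(T^n) into R(T^{n+1})
  have hmap : ∀ x ∈ LinearMap.range (T ^ n), T x ∈ LinearMap.range (T ^ (n + 1)) := by
    rintro x ⟨y, rfl⟩
    exact ⟨y, by rw [pow_succ']; rfl⟩
  let g : ↥(LinearMap.range (T ^ n)) →ₗ[K] ↥(LinearMap.range (T ^ (n + 1))) :=
    (T.domRestrict _).codRestrict _ (fun x => hmap x x.2)
  let φ : ↥(LinearMap.range (T ^ n)) →ₗ[K]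
      (↥(LinearMap.range (T ^ (n + 1))) ⧸
        (LinearMap.range (T ^ (n + 2))).comap (LinearMap.range (T ^ (n + 1))).subtype) :=
    (Submodule.mkQ _).comp g
  have hker : (LinearMap.range (T ^ (n + 1))).comap (LinearMap.range (T ^ n)).subtype ≤
      LinearMap.ker φ := by
    rintro ⟨x, hx⟩ hx1
    simp only [Submodule.mem_comap, Submodule.coe_subtype] at hx1
    obtain ⟨y, rfl⟩ := hx1
    simp only [φ, g, LinearMap.mem_ker, LinearMap.comp_apply, Submodule.mkQ_apply,
      Submodule.Quotient.mk_eq_zero, Submodule.mem_comap, Submodule.coe_subtype,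
      LinearMap.codRestrict_apply, LinearMap.domRestrict_apply]
    exact ⟨y, by rw [pow_succ']; rfl⟩
  let ψ := Submodule.liftQ _ φ hker
  have hsurj : Function.Surjective ψ := by
    intro q
    obtain ⟨⟨x, hx⟩, rfl⟩ := Submodule.mkQ_surjective _ q
    obtain ⟨y, rfl⟩ := hx
    refine ⟨Submodule.Quotient.mk ⟨(T ^ n) y, ⟨y, rfl⟩⟩, ?_⟩
    simp only [ψ, Submodule.liftQ_apply, φ, g, LinearMap.comp_apply, Submodule.mkQ_apply,
      LinearMap.codRestrict_apply, LinearMap.domRestrict_apply]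
    congr 1
    ext
    simp [pow_succ']
    rfl
  exact (LinearMap.rank_le_of_surjective ψ hsurj)
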